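/- Let f₁,…,f_N : [0,1] → [0,1] be increasing homeomorphisms fixing 0 and 1, and (p₁,…,p_N) a probability vector with all pᵢ > 0. Suppose for every x ∈ (0,1) there exist i, j with fᵢ(x) < x < f_j(x). Then the Markov operator P has at most one invariant probability measure supported on (0,1). -/

import Mathlib

open Set MeasureTheory ProbabilityTheory

lemma stmt5_exists_inverse (f : ℝ → ℝ) (hmono : StrictMonoOn f (Icc 0 1))
    (hsurj : SurjOn f (Icc 0 1) (Icc 0 1)) (h0 : f 0 = 0) (h1 : f 1 = 1) :
    ∃ g : ℝ → ℝ, MapsTo g (Icc 0 1) (Icc 0 1) ∧ (∀ x ∈ Icc (0:ℝ) 1, f (g x) = x) ∧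
      (∀ x ∈ Ioo (0:ℝ) 1, g x ∈ Ioo 0 1) ∧
      (∀ x ∈ Icc (0:ℝ) 1, ∀ y ∈ Icc (0:ℝ) 1, (f y ≤ x ↔ y ≤ g x)) := by
  classical
  choose g hg1 hg2 using fun x (hx : x ∈ Icc (0:ℝ) 1) => hsurj hx
  refine ⟨fun x => if hx : x ∈ Icc (0:ℝ) 1 then g x hx else x, ?_, ?_, ?_, ?_⟩
  · intro x hx; simp only [dif_pos hx]; exact hg1 x hx
  · intro x hx; simp only [dif_pos hx]; exact hg2 x hx
  · intro x hx
    have hx' : x ∈ Icc (0:ℝ) 1 := Ioo_subset_Icc_self hx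
    simp only [dif_pos hx']
    rcases hg1 x hx' with ⟨hge, hgle⟩
    constructor
    · rcases lt_or_eq_of_le hge with h | h
      · exact h
      · exfalso
        have : f (g x hx') = f 0 := by rw [← h]
        rw [hg2 x hx', h0] at this
        exact absurd (this ▸ hx.1) (lt_irrefl (0:ℝ))
    · rcases lt_or_eq_of_le hgle with h | h
      · exact h
      · exfalso
        have : f (g x hx') = f 1 := by rw [h]
        rw [hg2 x hx', h1] at this
        exact absurd (this ▸ hx.2) (lt_irrefl (1:ℝ))
  · intro x hx y hy
    simp only [dif_pos hx]
    constructor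
    · intro hfy
      by_contra hlt
      push_neg at hlt
      have := hmono (hg1 x hx) hy hlt
      rw [hg2 x hx] at this
      exact absurd (lt_of_le_of_lt hfy this) (lt_irrefl _)
    · intro hle
      have := hmono.monotoneOn hy (hg1 x hx) hle
      rwa [hg2 x hx] at this

lemma stmt5_apply {N : ℕ} {f : Fin N → ℝ → ℝ} {p : Fin N → ℝ} {μ : Measure ℝ}
    (hmeas : ∀ i, Measurable (f i))
    (hinv : (∑ i, ENNReal.ofReal (p i) • Measure.map (f i) μ) = μ)
    {s : Set ℝ} (hs : MeasurableSet s) :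
    μ s = ∑ i, ENNReal.ofReal (p i) * μ (f i ⁻¹' s) := by
  conv_lhs => rw [← hinv]
  rw [Measure.finset_sum_apply]
  exact Finset.sum_congr rfl fun i _ => by
    rw [Measure.smul_apply, Measure.map_apply (hmeas i) hs, smul_eq_mul]

-- real version for a (0,1)-concentrated probability measure
lemma stmt5_apply_real {N : ℕ} {f : Fin N → ℝ → ℝ} {p : Fin N → ℝ} {μ : Measure ℝ}
    [IsProbabilityMeasure μ]
    (hmeas : ∀ i, Measurable (f i)) (hp : ∀ i, 0 < p i)
    (hinv : (∑ i, ENNReal.ofReal (p i) • Measure.map (f i) μ) = μ)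
    (hμ01 : μ (Ioo (0:ℝ) 1) = 1)
    {s : Set ℝ} (hs : MeasurableSet s) (t : Fin N → Set ℝ)
    (hint : ∀ i, f i ⁻¹' s ∩ Ioo 0 1 = t i ∩ Ioo 0 1) :
    (μ s).toReal = ∑ i, p i * (μ (t i)).toReal := by
  have hcompl : μ (Ioo (0:ℝ) 1)ᶜ = 0 := by
    rw [measure_compl measurableSet_Ioo (measure_ne_top μ _), hμ01, measure_univ, tsub_self]
  have hkey : ∀ i, μ (f i ⁻¹' s) = μ (t i) := by
    intro i
    rw [← measure_inter_conull hcompl, hint i, measure_inter_conull hcompl]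
  rw [stmt5_apply hmeas hinv hs, ENNReal.toReal_sum
      (fun i _ => ENNReal.mul_ne_top ENNReal.ofReal_ne_top (measure_ne_top μ _))]
  exact Finset.sum_congr rfl fun i _ => by
    rw [hkey i, ENNReal.toReal_mul, ENNReal.toReal_ofReal (hp i).le]

lemma stmt5_noAtoms (N : ℕ) (f : Fin N → ℝ → ℝ) (p : Fin N → ℝ)
    (hmeas : ∀ i, Measurable (f i))
    (hmono : ∀ i, StrictMonoOn (f i) (Icc 0 1))
    (hsurj : ∀ i, SurjOn (f i) (Icc 0 1) (Icc 0 1))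
    (h0 : ∀ i, f i 0 = 0) (h1 : ∀ i, f i 1 = 1)
    (hp : ∀ i, 0 < p i) (hp1 : ∑ i, p i = 1)
    (hminmax : ∀ x ∈ Ioo (0:ℝ) 1, (∃ i, f i x < x) ∧ (∃ j, x < f j x))
    (μ : Measure ℝ) (hprob : IsProbabilityMeasure μ)
    (hμ01 : μ (Ioo (0:ℝ) 1) = 1)
    (hinv : (∑ i, ENNReal.ofReal (p i) • Measure.map (f i) μ) = μ) :
    ∀ x : ℝ, μ {x} = 0 := by
  classical
  by_contra hcon
  push_neg at hcon
  obtain ⟨z, hz⟩ := hcon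
  -- the inverse maps
  choose g hg1 hg2 hg3 hg4 using fun i =>
    stmt5_exists_inverse (f i) (hmono i) (hsurj i) (h0 i) (h1 i)
  -- basic facts
  have hNpos : 0 < N := by
    rcases Nat.eq_zero_or_pos N with h | h
    · subst h; simp at hp1
    · exact h
  haveI : Nonempty (Fin N) := ⟨⟨0, hNpos⟩⟩
  set pmin : ℝ := Finset.univ.inf' Finset.univ_nonempty p with hpmin_def
  have hpmin_le : ∀ i, pmin ≤ p i := fun i => Finset.inf'_le _ (Finset.mem_univ i)
  have hpmin_pos : 0 < pmin := by
    obtain ⟨i, _, hi⟩ := Finset.exists_mem_eq_inf' Finset.univ_nonempty p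
    rw [hpmin_def, hi]; exact hp i
  have hpmin_le_one : pmin ≤ 1 := by
    have h2 : p ⟨0, hNpos⟩ ≤ ∑ i, p i :=
      Finset.single_le_sum (fun i _ => (hp i).le) (Finset.mem_univ _)
    rw [hp1] at h2
    exact (hpmin_le _).trans h2
  -- atom mass function
  set A : ℝ → ℝ := fun x => (μ {x}).toReal with hA_def
  have hA_nonneg : ∀ x, 0 ≤ A x := fun x => ENNReal.toReal_nonneg
  have hA_le_one : ∀ x, A x ≤ 1 := by
    intro x
    have := prob_le_one (μ := μ) (s := {x})
    simpa [hA_def] using ENNReal.toReal_mono ENNReal.one_ne_top this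
  have hbdd : BddAbove (Set.range A) := ⟨1, by rintro _ ⟨x, rfl⟩; exact hA_le_one x⟩
  set m : ℝ := ⨆ x, A x with hm_def
  have hle_m : ∀ x, A x ≤ m := fun x => le_ciSup hbdd x
  have hm_pos : 0 < m := by
    have hz' : 0 < A z := ENNReal.toReal_pos hz (measure_ne_top μ _)
    exact lt_of_lt_of_le hz' (hle_m z)
  -- concentration : positive atoms lie in (0,1)
  have hconc : ∀ x : ℝ, 0 < A x → x ∈ Ioo (0:ℝ) 1 := by
    intro x hx
    by_contra hxn
    have hsub : ({x} : Set ℝ) ⊆ (Ioo (0:ℝ) 1)ᶜ := by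
      intro y hy; rw [Set.mem_singleton_iff] at hy; subst hy; exact hxn
    have hcompl : μ (Ioo (0:ℝ) 1)ᶜ = 0 := by
      rw [measure_compl measurableSet_Ioo (measure_ne_top μ _), hμ01, measure_univ, tsub_self]
    have : μ {x} = 0 := le_antisymm (hcompl ▸ measure_mono hsub) zero_le
    simp [hA_def, this] at hx
  -- invariance of atoms
  have hatom : ∀ x ∈ Ioo (0:ℝ) 1, A x = ∑ i, p i * A (g i x) := by
    intro x hx
    have hx' : x ∈ Icc (0:ℝ) 1 := Ioo_subset_Icc_self hx
    apply stmt5_apply_real hmeas hp hinv hμ01 (measurableSet_singleton x)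
    intro i
    ext y
    simp only [Set.mem_inter_iff, Set.mem_preimage, Set.mem_singleton_iff]
    constructor
    · rintro ⟨hfy, hy⟩
      refine ⟨?_, hy⟩
      have h1 : f i y ≤ x := le_of_eq hfy
      have h2 : x ≤ f i y := le_of_eq hfy.symm
      have hy' : y ∈ Icc (0:ℝ) 1 := Ioo_subset_Icc_self hy
      have hgi : g i x ∈ Icc (0:ℝ) 1 := hg1 i hx'
      have l1 : y ≤ g i x := (hg4 i x hx' y hy').1 h1
      -- other direction : g i x ≤ y
      have l2 : g i x ≤ y := by
        by_contra hlt
        push_neg at hlt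
        have := hmono i hy' hgi hlt
        rw [hg2 i x hx', ← hfy] at this
        exact lt_irrefl _ this
      exact le_antisymm l1 l2
    · rintro ⟨hfy, hy⟩
      subst hfy
      exact ⟨hg2 i x hx', hy⟩
  -- step lemma
  have hstep : ∀ x ∈ Ioo (0:ℝ) 1, ∀ δ : ℝ, 0 ≤ δ → m - δ ≤ A x →
      ∃ y, x < y ∧ y ∈ Ioo (0:ℝ) 1 ∧ m - δ / pmin ≤ A y := by
    intro x hx δ hδ hAx
    obtain ⟨i, hi⟩ := (hminmax x hx).1
    have hx' : x ∈ Icc (0:ℝ) 1 := Ioo_subset_Icc_self hx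
    refine ⟨g i x, ?_, hg3 i x hx, ?_⟩
    · by_contra hle
      push_neg at hle
      have := (hmono i).monotoneOn (hg1 i hx') hx' hle
      rw [hg2 i x hx'] at this
      exact absurd (lt_of_le_of_lt this hi) (lt_irrefl x)
    · -- the mass estimate
      have hsum := hatom x hx
      have hsplit : ∑ j, p j * A (g j x)
          = (∑ j ∈ Finset.univ.erase i, p j * A (g j x)) + p i * A (g i x) := by
        rw [Finset.sum_erase_add _ _ (Finset.mem_univ i)]
      have hbound : ∑ j ∈ Finset.univ.erase i, p j * A (g j x)
          ≤ ∑ j ∈ Finset.univ.erase i, p j * m :=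
        Finset.sum_le_sum fun j _ => mul_le_mul_of_nonneg_left (hle_m _) (hp j).le
      have herase : ∑ j ∈ Finset.univ.erase i, p j = 1 - p i := by
        have := Finset.sum_erase_add Finset.univ p (Finset.mem_univ i)
        rw [hp1] at this
        linarith
      have hsum_m : ∑ j ∈ Finset.univ.erase i, p j * m = (1 - p i) * m := by
        rw [← Finset.sum_mul, herase]
      have key : p i * m - δ ≤ p i * A (g i x) := by
        have : m - δ ≤ (1 - p i) * m + p i * A (g i x) := by
          calc m - δ ≤ A x := hAx
            _ = ∑ j, p j * A (g j x) := hsum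
            _ = (∑ j ∈ Finset.univ.erase i, p j * A (g j x)) + p i * A (g i x) := hsplit
            _ ≤ (1 - p i) * m + p i * A (g i x) := by rw [← hsum_m]; linarith [hbound]
        nlinarith
      have key2 : m - δ / p i ≤ A (g i x) := by
        have h3 : p i * (m - δ / p i) ≤ p i * A (g i x) := by
          rw [mul_sub, mul_div_cancel₀ _ (hp i).ne']
          linarith
        exact le_of_mul_le_mul_left h3 (hp i)
      have hdivle : δ / p i ≤ δ / pmin :=
        div_le_div_of_nonneg_left hδ hpmin_pos (hpmin_le i)
      linarith
  -- chain construction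
  obtain ⟨n₀, hn₀⟩ := exists_nat_gt (2 / m)
  set δ : ℝ := pmin ^ n₀ * (m / 2) with hδ_def
  have hδpos : 0 < δ := mul_pos (pow_pos hpmin_pos _) (by linarith)
  obtain ⟨x₀, hx₀⟩ : ∃ x, m - δ < A x := by
    rcases exists_lt_of_lt_ciSup (show m - δ < m by linarith) with ⟨x, hx⟩
    exact ⟨x, hx⟩
  have hpow_le_one : ∀ k : ℕ, pmin ^ k ≤ 1 := fun k =>
    pow_le_one₀ hpmin_pos.le hpmin_le_one
  have hx₀pos : 0 < A x₀ := by
    have : pmin ^ n₀ * (m / 2) ≤ m / 2 := by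
      nlinarith [hpow_le_one n₀]
    rw [hδ_def] at hx₀
    linarith
  have hx₀Ioo : x₀ ∈ Ioo (0:ℝ) 1 := hconc x₀ hx₀pos
  have hchain : ∀ n : ℕ, ∃ x ∈ Ioo (0:ℝ) 1, ∃ s : Finset ℝ, s.card = n ∧
      (∀ y ∈ s, y < x) ∧ (∀ y ∈ s, m - δ / pmin ^ n ≤ A y) ∧ m - δ / pmin ^ n ≤ A x := by
    intro n
    induction n with
    | zero =>
      refine ⟨x₀, hx₀Ioo, ∅, rfl, by simp, by simp, ?_⟩
      simp only [pow_zero, div_one]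
      linarith
    | succ k ih =>
      obtain ⟨x, hxI, s, hcard, hlt, hsb, hxb⟩ := ih
      obtain ⟨y, hxy, hyI, hyb⟩ := hstep x hxI (δ / pmin ^ k)
        (div_nonneg hδpos.le (pow_pos hpmin_pos k).le) hxb
      have hdiv : δ / pmin ^ k / pmin = δ / pmin ^ (k + 1) := by
        rw [div_div, ← pow_succ]
      refine ⟨y, hyI, insert x s, ?_, ?_, ?_, ?_⟩
      · rw [Finset.card_insert_of_notMem (fun hxs => lt_irrefl x (hlt x hxs)), hcard]
      · intro w hw
        rcases Finset.mem_insert.1 hw with rfl | hw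
        · exact hxy
        · exact (hlt w hw).trans hxy
      · intro w hw
        have hmono_pow : δ / pmin ^ k ≤ δ / pmin ^ (k + 1) := by
          apply div_le_div_of_nonneg_left hδpos.le (pow_pos hpmin_pos _)
          calc pmin ^ (k+1) = pmin ^ k * pmin := pow_succ _ _
            _ ≤ pmin ^ k * 1 := by nlinarith [pow_pos hpmin_pos k]
            _ = pmin ^ k := mul_one _
        rcases Finset.mem_insert.1 hw with rfl | hw
        · linarith
        · linarith [hsb w hw]
      · rw [← hdiv]; exact hyb
  -- contradiction
  obtain ⟨x, hxI, s, hcard, hlt, hsb, hxb⟩ := hchain n₀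
  have hδdiv : δ / pmin ^ n₀ = m / 2 := by
    rw [hδ_def, mul_comm, mul_div_assoc]
    rw [div_self (pow_pos hpmin_pos n₀).ne', mul_one]
  set t : Finset ℝ := insert x s with ht_def
  have htcard : t.card = n₀ + 1 := by
    rw [ht_def, Finset.card_insert_of_notMem (fun hxs => lt_irrefl x (hlt x hxs)), hcard]
  have htb : ∀ y ∈ t, m / 2 ≤ A y := by
    intro y hy
    rcases Finset.mem_insert.1 hy with rfl | hy
    · have := hxb; rw [hδdiv] at this; linarith
    · have := hsb y hy; rw [hδdiv] at this; linarith
  -- sum of atoms over t is at most 1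
  have hμt : ∑ y ∈ t, μ {y} = μ (↑t) := by
    have hU : (⋃ y ∈ t, ({y} : Set ℝ)) = ↑t := by ext w; simp
    rw [← hU, measure_biUnion_finset ?_ (fun y _ => measurableSet_singleton y)]
    intro a _ b _ hab
    exact Set.disjoint_singleton.2 hab
  have hsum_le : ∑ y ∈ t, A y ≤ 1 := by
    have h1 : (∑ y ∈ t, μ {y}).toReal = ∑ y ∈ t, A y :=
      ENNReal.toReal_sum fun y _ => measure_ne_top μ _
    rw [← h1, hμt]
    have := prob_le_one (μ := μ) (s := (↑t : Set ℝ))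
    simpa using ENNReal.toReal_mono ENNReal.one_ne_top this
  have hsum_ge : (n₀ + 1 : ℝ) * (m / 2) ≤ ∑ y ∈ t, A y := by
    have := Finset.card_nsmul_le_sum t A (m / 2) htb
    rw [htcard] at this
    simpa [nsmul_eq_mul, mul_comm] using this
  have : (2 : ℝ) / m * (m / 2) < (n₀ + 1 : ℝ) * (m / 2) := by
    apply mul_lt_mul_of_pos_right _ (by linarith)
    linarith
  rw [div_mul_div_comm, mul_comm] at this
  rw [div_self (by positivity : m * 2 ≠ 0)] at this
  linarith

lemma stmt5_cdf_continuous (μ : Measure ℝ) [IsProbabilityMeasure μ]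
    (hatom : ∀ x : ℝ, μ {x} = 0) : Continuous (cdf μ) := by
  rw [continuous_iff_continuousAt]
  intro x
  have hmono : Monotone (cdf μ) := monotone_cdf μ
  rw [hmono.continuousAt_iff_leftLim_eq_rightLim]
  have hleft : Function.leftLim (cdf μ) x = cdf μ x := by
    have h1 : (cdf μ).measure {x} = 0 := by rw [measure_cdf]; exact hatom x
    rw [StieltjesFunction.measure_singleton] at h1
    have h2 : cdf μ x - Function.leftLim (cdf μ) x ≤ 0 := ENNReal.ofReal_eq_zero.1 h1
    have h3 := hmono.leftLim_le (le_refl x)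
    linarith
  have hright : Function.rightLim (cdf μ) x = cdf μ x := by
    apply rightLim_eq_of_tendsto
    exact ((cdf μ).right_continuous x).mono Ioi_subset_Ici_self
  rw [hleft, hright]

lemma stmt5_cdf_le (N : ℕ) (f : Fin N → ℝ → ℝ) (p : Fin N → ℝ)
    (hmeas : ∀ i, Measurable (f i))
    (hmono : ∀ i, StrictMonoOn (f i) (Icc 0 1))
    (hsurj : ∀ i, SurjOn (f i) (Icc 0 1) (Icc 0 1))
    (h0 : ∀ i, f i 0 = 0) (h1 : ∀ i, f i 1 = 1)
    (hp : ∀ i, 0 < p i) (hp1 : ∑ i, p i = 1)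
    (hminmax : ∀ x ∈ Ioo (0:ℝ) 1, (∃ i, f i x < x) ∧ (∃ j, x < f j x))
    (μ₁ μ₂ : Measure ℝ)
    (hprob₁ : IsProbabilityMeasure μ₁) (hprob₂ : IsProbabilityMeasure μ₂)
    (hμ₁01 : μ₁ (Ioo (0:ℝ) 1) = 1) (hμ₂01 : μ₂ (Ioo (0:ℝ) 1) = 1)
    (hinv₁ : (∑ i, ENNReal.ofReal (p i) • Measure.map (f i) μ₁) = μ₁)
    (hinv₂ : (∑ i, ENNReal.ofReal (p i) • Measure.map (f i) μ₂) = μ₂) :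
    ∀ x ∈ Icc (0:ℝ) 1, cdf μ₁ x ≤ cdf μ₂ x := by
  classical
  choose g hg1 hg2 hg3 hg4 using fun i =>
    stmt5_exists_inverse (f i) (hmono i) (hsurj i) (h0 i) (h1 i)
  have hcont₁ : Continuous (cdf μ₁) := stmt5_cdf_continuous μ₁
    (stmt5_noAtoms N f p hmeas hmono hsurj h0 h1 hp hp1 hminmax μ₁ hprob₁ hμ₁01 hinv₁)
  have hcont₂ : Continuous (cdf μ₂) := stmt5_cdf_continuous μ₂
    (stmt5_noAtoms N f p hmeas hmono hsurj h0 h1 hp hp1 hminmax μ₂ hprob₂ hμ₂01 hinv₂)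
  -- master invariance for cdfs
  have master : ∀ (μ : Measure ℝ), IsProbabilityMeasure μ → μ (Ioo (0:ℝ) 1) = 1 →
      (∑ i, ENNReal.ofReal (p i) • Measure.map (f i) μ) = μ →
      ∀ x ∈ Icc (0:ℝ) 1, cdf μ x = ∑ i, p i * cdf μ (g i x) := by
    intro μ hprob hμ01 hinv x hx
    haveI := hprob
    have := stmt5_apply_real (μ := μ) hmeas hp hinv hμ01 (measurableSet_Iic (a := x))
      (fun i => Iic (g i x)) ?_
    · rw [cdf_eq_real, measureReal_def, this]
      exact Finset.sum_congr rfl fun i _ => by rw [cdf_eq_real, measureReal_def]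
    · intro i
      ext y
      simp only [Set.mem_inter_iff, Set.mem_preimage, Set.mem_Iic]
      constructor
      · rintro ⟨hfy, hy⟩
        exact ⟨(hg4 i x hx y (Ioo_subset_Icc_self hy)).1 hfy, hy⟩
      · rintro ⟨hfy, hy⟩
        exact ⟨(hg4 i x hx y (Ioo_subset_Icc_self hy)).2 hfy, hy⟩
  -- boundary values
  have hbdry : ∀ (μ : Measure ℝ), IsProbabilityMeasure μ → μ (Ioo (0:ℝ) 1) = 1 →
      cdf μ 0 = 0 ∧ cdf μ 1 = 1 := by
    intro μ hprob hμ01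
    haveI := hprob
    have hcompl : μ (Ioo (0:ℝ) 1)ᶜ = 0 := by
      rw [measure_compl measurableSet_Ioo (measure_ne_top μ _), hμ01, measure_univ, tsub_self]
    constructor
    · rw [cdf_eq_real, measureReal_def]
      have : μ (Iic 0) = μ (Iic 0 ∩ Ioo 0 1) := (measure_inter_conull hcompl).symm
      have hempty : (Iic (0:ℝ) ∩ Ioo 0 1) = ∅ := by
        rw [Set.eq_empty_iff_forall_notMem]
        rintro y ⟨hy, hy1, _⟩
        exact absurd (hy1.trans_le (Set.mem_Iic.1 hy)) (lt_irrefl 0)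
      rw [this, hempty, measure_empty]
      simp
    · rw [cdf_eq_real, measureReal_def]
      have h1' : (1:ENNReal) ≤ μ (Iic 1) := by
        rw [← hμ01]; exact measure_mono (fun y hy => le_of_lt hy.2)
      have h2' : μ (Iic 1) ≤ 1 := prob_le_one
      rw [le_antisymm h2' h1']
      simp
  obtain ⟨hb₁0, hb₁1⟩ := hbdry μ₁ hprob₁ hμ₁01
  obtain ⟨hb₂0, hb₂1⟩ := hbdry μ₂ hprob₂ hμ₂01
  -- the difference function
  set h : ℝ → ℝ := fun x => cdf μ₁ x - cdf μ₂ x with hh_def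
  have hhcont : Continuous h := hcont₁.sub hcont₂
  have hinvh : ∀ x ∈ Icc (0:ℝ) 1, h x = ∑ i, p i * h (g i x) := by
    intro x hx
    simp only [hh_def]
    rw [master μ₁ hprob₁ hμ₁01 hinv₁ x hx, master μ₂ hprob₂ hμ₂01 hinv₂ x hx,
      ← Finset.sum_sub_distrib]
    exact Finset.sum_congr rfl fun i _ => by ring
  -- max argument
  suffices hM : ∀ x ∈ Icc (0:ℝ) 1, h x ≤ 0 by
    intro x hx
    have := hM x hx
    simp only [hh_def] at this
    linarith
  obtain ⟨x₀, hx₀mem, hx₀max⟩ :=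
    isCompact_Icc.exists_isMaxOn (Set.nonempty_Icc.2 zero_le_one) hhcont.continuousOn
  set M : ℝ := h x₀ with hM_def
  intro x hx
  have hle : h x ≤ M := hx₀max hx
  by_contra hpos
  push_neg at hpos
  have hMpos : 0 < M := lt_of_lt_of_le hpos hle
  -- the set where h attains M
  set S : Set ℝ := Icc 0 1 ∩ h ⁻¹' {M} with hS_def
  have hSne : S.Nonempty := ⟨x₀, hx₀mem, rfl⟩
  have hSclosed : IsClosed S := isClosed_Icc.inter (isClosed_singleton.preimage hhcont)
  have hScompact : IsCompact S := isCompact_Icc.of_isClosed_subset hSclosed inter_subset_left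
  set s := sSup S with hs_def
  have hsS : s ∈ S := hScompact.sSup_mem hSne
  obtain ⟨hsIcc, hsM⟩ := hsS
  rw [Set.mem_preimage, Set.mem_singleton_iff] at hsM
  have hs0 : s ≠ 0 := by
    intro he
    rw [he] at hsM
    simp only [hh_def] at hsM
    rw [hb₁0, hb₂0] at hsM
    linarith
  have hs1 : s ≠ 1 := by
    intro he
    rw [he] at hsM
    simp only [hh_def] at hsM
    rw [hb₁1, hb₂1] at hsM
    linarith
  have hsIoo : s ∈ Ioo (0:ℝ) 1 :=
    ⟨lt_of_le_of_ne hsIcc.1 (Ne.symm hs0), lt_of_le_of_ne hsIcc.2 hs1⟩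
  -- all h (g i s) = M
  have hall : ∀ i, h (g i s) = M := by
    by_contra hno
    push_neg at hno
    obtain ⟨i₀, hi₀⟩ := hno
    have hle' : ∀ i, h (g i s) ≤ M := fun i => hx₀max (hg1 i hsIcc)
    have hstrict : h (g i₀ s) < M := lt_of_le_of_ne (hle' i₀) hi₀
    have : ∑ i, p i * h (g i s) < ∑ i, p i * M := by
      apply Finset.sum_lt_sum
      · exact fun i _ => mul_le_mul_of_nonneg_left (hle' i) (hp i).le
      · exact ⟨i₀, Finset.mem_univ _, mul_lt_mul_of_pos_left hstrict (hp i₀)⟩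
    rw [← hinvh s hsIcc, hsM, ← Finset.sum_mul, hp1, one_mul] at this
    exact lt_irrefl M this
  -- pick i with f i s < s, then g i s > s lies in S, contradicting sSup
  obtain ⟨i, hi⟩ := (hminmax s hsIoo).1
  have hgi_gt : s < g i s := by
    by_contra hle'
    push_neg at hle'
    have := (hmono i).monotoneOn (hg1 i hsIcc) hsIcc hle'
    rw [hg2 i s hsIcc] at this
    exact absurd (lt_of_le_of_lt this hi) (lt_irrefl s)
  have hgiS : g i s ∈ S := by
    refine ⟨hg1 i hsIcc, ?_⟩
    rw [Set.mem_preimage, Set.mem_singleton_iff]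
    exact hall i
  have hbddS : BddAbove S := hScompact.bddAbove
  have := le_csSup hbddS hgiS
  rw [← hs_def] at this
  linarith

/-- Uniqueness: the Markov operator of such an iterated function
system has at most one invariant probability measure concentrated on `(0,1)`. -/
theorem stmt5 (N : ℕ) (f : Fin N → ℝ → ℝ) (p : Fin N → ℝ)
    (hmeas : ∀ i, Measurable (f i))
    (hmono : ∀ i, StrictMonoOn (f i) (Icc 0 1))
    (hmaps : ∀ i, MapsTo (f i) (Icc 0 1) (Icc 0 1))
    (hcont : ∀ i, ContinuousOn (f i) (Icc 0 1))
    (hsurj : ∀ i, SurjOn (f i) (Icc 0 1) (Icc 0 1))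
    (h0 : ∀ i, f i 0 = 0) (h1 : ∀ i, f i 1 = 1)
    (hp : ∀ i, 0 < p i) (hp1 : ∑ i, p i = 1)
    (hminmax : ∀ x ∈ Ioo (0:ℝ) 1, (∃ i, f i x < x) ∧ (∃ j, x < f j x))
    (μ₁ μ₂ : Measure ℝ)
    (hprob₁ : IsProbabilityMeasure μ₁) (hprob₂ : IsProbabilityMeasure μ₂)
    (hμ₁01 : μ₁ (Ioo (0:ℝ) 1) = 1) (hμ₂01 : μ₂ (Ioo (0:ℝ) 1) = 1)
    (hinv₁ : (∑ i, ENNReal.ofReal (p i) • Measure.map (f i) μ₁) = μ₁)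
    (hinv₂ : (∑ i, ENNReal.ofReal (p i) • Measure.map (f i) μ₂) = μ₂) :
    μ₁ = μ₂ := by
  have hle := stmt5_cdf_le N f p hmeas hmono hsurj h0 h1 hp hp1 hminmax μ₁ μ₂
    hprob₁ hprob₂ hμ₁01 hμ₂01 hinv₁ hinv₂
  have hge := stmt5_cdf_le N f p hmeas hmono hsurj h0 h1 hp hp1 hminmax μ₂ μ₁
    hprob₂ hprob₁ hμ₂01 hμ₁01 hinv₂ hinv₁
  have hout : ∀ (μ : Measure ℝ), IsProbabilityMeasure μ → μ (Ioo (0:ℝ) 1) = 1 →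
      ∀ x : ℝ, (x < 0 → cdf μ x = 0) ∧ (1 < x → cdf μ x = 1) := by
    intro μ hprob hμ01 x
    haveI := hprob
    have hcompl : μ (Ioo (0:ℝ) 1)ᶜ = 0 := by
      rw [measure_compl measurableSet_Ioo (measure_ne_top μ _), hμ01, measure_univ, tsub_self]
    constructor
    · intro hx
      rw [cdf_eq_real, measureReal_def]
      have h2 : μ (Iic x) = μ (Iic x ∩ Ioo 0 1) := (measure_inter_conull hcompl).symm
      have hempty : (Iic x ∩ Ioo (0:ℝ) 1) = ∅ := by
        rw [Set.eq_empty_iff_forall_notMem]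
        rintro y ⟨hy, hy1, _⟩
        have : y ≤ x := Set.mem_Iic.1 hy
        linarith
      rw [h2, hempty, measure_empty]
      simp
    · intro hx
      rw [cdf_eq_real, measureReal_def]
      have h1' : (1:ENNReal) ≤ μ (Iic x) := by
        rw [← hμ01]
        exact measure_mono (fun y hy => le_of_lt (lt_trans hy.2 hx))
      have h2' : μ (Iic x) ≤ 1 := prob_le_one
      rw [le_antisymm h2' h1']
      simp
  have heq : ∀ x, cdf μ₁ x = cdf μ₂ x := by
    intro x
    rcases lt_or_ge x 0 with hx0 | hx0
    · rw [((hout μ₁ hprob₁ hμ₁01 x).1 hx0), ((hout μ₂ hprob₂ hμ₂01 x).1 hx0)]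
    · rcases le_or_gt x 1 with hx1 | hx1
      · exact le_antisymm (hle x ⟨hx0, hx1⟩) (hge x ⟨hx0, hx1⟩)
      · rw [((hout μ₁ hprob₁ hμ₁01 x).2 hx1), ((hout μ₂ hprob₂ hμ₂01 x).2 hx1)]
  exact MeasureTheory.Measure.eq_of_cdf μ₁ μ₂ (StieltjesFunction.ext heq)
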